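/- Let K be a field, P = K[x_1,...,x_n], σ a term ordering, and I, J ideals in P. If I is strictly contained in J, then O_σ(J) strictly σ-precedes O_σ(I). -/

import Mathlib

open MvPolynomial
open scoped Classical

namespace GB

variable {n : ℕ}

/-- The σ-leading exponent (leading term, as a power-product) of a polynomial;
`0` for the zero polynomial. -/
noncomputable def lexp {K : Type*} [CommSemiring K] (m : MonomialOrder (Fin n))
    (f : MvPolynomial (Fin n) K) : Fin n →₀ ℕ :=
  m.toSyn.symm (f.support.sup fun d => m.toSyn d)

/-- The σ-leading coefficient. -/
noncomputable def lcoeff {K : Type*} [CommSemiring K] (m : MonomialOrder (Fin n))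
    (f : MvPolynomial (Fin n) K) : K :=
  MvPolynomial.coeff (lexp m f) f

/-- The σ-leading monomial (leading coefficient times leading power-product). -/
noncomputable def LM {K : Type*} [CommSemiring K] (m : MonomialOrder (Fin n))
    (f : MvPolynomial (Fin n) K) : MvPolynomial (Fin n) K :=
  monomial (lexp m f) (lcoeff m f)

/-- The leading term ideal `LT_σ(I)` of an ideal, over a field. -/
noncomputable def LTIdeal {K : Type*} [Field K] (m : MonomialOrder (Fin n))
    (I : Ideal (MvPolynomial (Fin n) K)) : Ideal (MvPolynomial (Fin n) K) :=
  Ideal.span {t | ∃ f ∈ I, f ≠ 0 ∧ t = monomial (lexp m f) (1 : K)}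

/-- `G` is a σ-Gröbner basis of `I` (over a field). -/
def IsGB {K : Type*} [Field K] (m : MonomialOrder (Fin n))
    (G : Finset (MvPolynomial (Fin n) K)) (I : Ideal (MvPolynomial (Fin n) K)) : Prop :=
  (0 : MvPolynomial (Fin n) K) ∉ G ∧ (G : Set (MvPolynomial (Fin n) K)) ⊆ I ∧
    Ideal.span (G : Set (MvPolynomial (Fin n) K)) = I ∧
    ∀ f ∈ I, f ≠ 0 → ∃ g ∈ G, lexp m g ≤ lexp m f

/-- `G` is the reduced σ-Gröbner basis of `I`. -/
def IsReducedGB {K : Type*} [Field K] (m : MonomialOrder (Fin n))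
    (G : Finset (MvPolynomial (Fin n) K)) (I : Ideal (MvPolynomial (Fin n) K)) : Prop :=
  IsGB m G I ∧ (∀ g ∈ G, lcoeff m g = 1) ∧
    ∀ g ∈ G, ∀ d ∈ g.support, ∀ g' ∈ G, g' ≠ g → ¬ lexp m g' ≤ d

/-- `G` is a strong σ-Gröbner basis of the ideal `J ⊆ ℤ[x]` it generates. -/
def IsStrongGB (m : MonomialOrder (Fin n)) (G : Finset (MvPolynomial (Fin n) ℤ))
    (J : Ideal (MvPolynomial (Fin n) ℤ)) : Prop :=
  (0 : MvPolynomial (Fin n) ℤ) ∉ G ∧ Ideal.span (G : Set (MvPolynomial (Fin n) ℤ)) = J ∧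
    ∀ f ∈ J, f ≠ 0 → ∃ g ∈ G, LM m g ∣ LM m f

/-- `G` is a minimal strong σ-Gröbner basis of `J`. -/
def IsMinStrongGB (m : MonomialOrder (Fin n)) (G : Finset (MvPolynomial (Fin n) ℤ))
    (J : Ideal (MvPolynomial (Fin n) ℤ)) : Prop :=
  IsStrongGB m G J ∧ ∀ g ∈ G, ∀ g' ∈ G, g ≠ g' → ¬ LM m g ∣ LM m g'

/-- The denominator of a polynomial with rational coefficients. -/
def den (f : MvPolynomial (Fin n) ℚ) : ℕ :=
  f.support.lcm fun d => (MvPolynomial.coeff d f).den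

/-- The denominator of a finite set of polynomials. -/
noncomputable def denF (G : Finset (MvPolynomial (Fin n) ℚ)) : ℕ :=
  G.lcm den

/-- `f` scaled by `den f`, as an integer polynomial. -/
noncomputable def intScale (f : MvPolynomial (Fin n) ℚ) : MvPolynomial (Fin n) ℤ :=
  f.support.sum fun d => monomial d (MvPolynomial.coeff d f * (den f : ℚ)).num

/-- The primitive integral part of a polynomial with rational coefficients. -/
noncomputable def primQ (f : MvPolynomial (Fin n) ℚ) : MvPolynomial (Fin n) ℤ :=
  (intScale f).support.sum fun d =>
    monomial d (MvPolynomial.coeff d (intScale f) /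
      ((intScale f).support.gcd fun e => MvPolynomial.coeff e (intScale f)))

/-- Reduction of a rational number modulo `p` (meaningful when `p ∤ a.den`). -/
noncomputable def redQ (p : ℕ) (a : ℚ) : ZMod p :=
  (a.num : ZMod p) * (a.den : ZMod p)⁻¹

/-- Coefficientwise reduction modulo `p` of a polynomial with rational coefficients
(meaningful when `p` divides no coefficient denominator). -/
noncomputable def piP (p : ℕ) (f : MvPolynomial (Fin n) ℚ) :
    MvPolynomial (Fin n) (ZMod p) :=
  f.support.sum fun d => monomial d (redQ p (MvPolynomial.coeff d f))

/-- A σ-ordered tuple of (necessarily distinct) power-products. -/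
def SOrd (m : MonomialOrder (Fin n)) (L : List (Fin n →₀ ℕ)) : Prop :=
  L.Pairwise fun a b => m.toSyn a < m.toSyn b

/-- `T'` strictly σ-precedes `T`:  either `T` is a proper prefix of `T'`, or at the first
index where they differ (within both lengths) the entry of `T'` is σ-smaller. -/
def Prec (m : MonomialOrder (Fin n)) (T' T : List (Fin n →₀ ℕ)) : Prop :=
  (T <+: T' ∧ T ≠ T') ∨
    ∃ k, k < T.length ∧ k < T'.length ∧ T.take k = T'.take k ∧
      m.toSyn (T'.getD k 0) < m.toSyn (T.getD k 0)

/-- `T'` σ-precedes or equals `T`. -/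
def PrecEq (m : MonomialOrder (Fin n)) (T' T : List (Fin n →₀ ℕ)) : Prop :=
  Prec m T' T ∨ T' = T

/-- The minimal generating set of the monomial ideal `LT_σ(I)`: the set of leading
power-products of nonzero elements of `I` which are minimal w.r.t. divisibility. -/
def minGenSet {K : Type*} [Field K] (m : MonomialOrder (Fin n))
    (I : Ideal (MvPolynomial (Fin n) K)) : Set (Fin n →₀ ℕ) :=
  {d | (∃ f ∈ I, f ≠ 0 ∧ lexp m f = d) ∧
    ∀ f ∈ I, f ≠ 0 → lexp m f ≤ d → lexp m f = d}

/-- `L` is the tuple `O_σ(I)`: the σ-ordered tuple of the minimal generating set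
of `LT_σ(I)`. -/
def IsOsIdeal {K : Type*} [Field K] (m : MonomialOrder (Fin n))
    (I : Ideal (MvPolynomial (Fin n) K)) (L : List (Fin n →₀ ℕ)) : Prop :=
  SOrd m L ∧ ∀ d, d ∈ L ↔ d ∈ minGenSet m I

/-- `L` is the σ-ordered tuple of the interreduction of the set `S` of power-products. -/
def IsOsSet (m : MonomialOrder (Fin n)) (S : Finset (Fin n →₀ ℕ))
    (L : List (Fin n →₀ ℕ)) : Prop :=
  SOrd m L ∧ ∀ d, d ∈ L ↔ (d ∈ S ∧ ∀ s ∈ S, s ≤ d → s = d)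

end GB

section Aux

open GB

variable {n : ℕ} {K : Type*} [Field K] (m : MonomialOrder (Fin n))

lemma toSyn_lexp (f : MvPolynomial (Fin n) K) :
    m.toSyn (lexp m f) = f.support.sup fun d => m.toSyn d := by
  simp [lexp]

lemma lexp_mem_support {f : MvPolynomial (Fin n) K} (hf : f ≠ 0) :
    lexp m f ∈ f.support := by
  obtain ⟨b, hb, hsup⟩ := Finset.exists_mem_eq_sup f.support
    (MvPolynomial.support_nonempty.mpr hf) (fun d => m.toSyn d)
  have hb' : lexp m f = b := by
    simp [lexp, hsup]
  rwa [hb']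

lemma le_toSyn_lexp {f : MvPolynomial (Fin n) K} {d : Fin n →₀ ℕ} (hd : d ∈ f.support) :
    m.toSyn d ≤ m.toSyn (lexp m f) := by
  rw [toSyn_lexp]
  exact Finset.le_sup hd

lemma coeff_eq_zero_of_lexp_lt {f : MvPolynomial (Fin n) K} {d : Fin n →₀ ℕ}
    (hd : m.toSyn (lexp m f) < m.toSyn d) : MvPolynomial.coeff d f = 0 := by
  by_contra hc
  exact absurd (le_toSyn_lexp m (MvPolynomial.mem_support_iff.mpr hc)) (not_le.mpr hd)

lemma lcoeff_ne_zero {f : MvPolynomial (Fin n) K} (hf : f ≠ 0) : lcoeff m f ≠ 0 :=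
  MvPolynomial.mem_support_iff.mp (lexp_mem_support m hf)

/-- Key reduction step: subtracting the appropriate monomial multiple of `g` kills
the leading term of `f`. -/
lemma reduce_lt {f g : MvPolynomial (Fin n) K} (hf : f ≠ 0) (hg : g ≠ 0)
    (hle : lexp m g ≤ lexp m f) :
    ∀ d ∈ (f - (MvPolynomial.monomial (lexp m f - lexp m g)
        (lcoeff m f / lcoeff m g)) * g).support,
      m.toSyn d < m.toSyn (lexp m f) := by
  intro d hd
  set e := lexp m f - lexp m g with he
  set c := lcoeff m f / lcoeff m g with hc
  have heg : e + lexp m g = lexp m f := tsub_add_cancel_of_le hle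
  have hcoeff : ∀ u, MvPolynomial.coeff u (f - (MvPolynomial.monomial e c) * g)
      = MvPolynomial.coeff u f - (if e ≤ u then c * MvPolynomial.coeff (u - e) g else 0) := by
    intro u
    rw [MvPolynomial.coeff_sub, MvPolynomial.coeff_monomial_mul']
  have hdne : MvPolynomial.coeff d (f - (MvPolynomial.monomial e c) * g) ≠ 0 :=
    MvPolynomial.mem_support_iff.mp hd
  -- first : `d ≠ lexp m f`
  have hlf : MvPolynomial.coeff (lexp m f) (f - (MvPolynomial.monomial e c) * g) = 0 := by
    rw [hcoeff]
    have h1 : e ≤ lexp m f := tsub_le_self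
    rw [if_pos h1]
    have h2 : lexp m f - e = lexp m g := tsub_tsub_cancel_of_le hle
    rw [h2, hc]
    show GB.lcoeff m f - GB.lcoeff m f / GB.lcoeff m g * GB.lcoeff m g = 0
    rw [div_mul_cancel₀ _ (lcoeff_ne_zero m hg), sub_self]
  have hdnef : d ≠ lexp m f := by
    intro hcon
    exact hdne (hcon ▸ hlf)
  -- second : `¬ toSyn (lexp m f) < toSyn d`
  have hnot : ¬ m.toSyn (lexp m f) < m.toSyn d := by
    intro hlt
    apply hdne
    rw [hcoeff]
    rw [coeff_eq_zero_of_lexp_lt m hlt]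
    have h3 : (if e ≤ d then c * MvPolynomial.coeff (d - e) g else 0) = 0 := by
      split_ifs with h4
      · have h5 : d - e + e = d := tsub_add_cancel_of_le h4
        have h6 : m.toSyn (lexp m g) < m.toSyn (d - e) := by
          by_contra h7
          push_neg at h7
          have h8 : m.toSyn d ≤ m.toSyn (lexp m f) := by
            calc m.toSyn d = m.toSyn (d - e) + m.toSyn e := by
                  rw [← map_add, h5]
              _ ≤ m.toSyn (lexp m g) + m.toSyn e := by
                  exact add_le_add_left h7 _
              _ = m.toSyn (lexp m f) := by
                  rw [← map_add, add_comm, heg]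
          exact absurd hlt (not_lt.mpr h8)
        rw [coeff_eq_zero_of_lexp_lt m h6, mul_zero]
      · rfl
    rw [h3, sub_zero]
  have hled : m.toSyn d ≤ m.toSyn (lexp m f) := not_lt.mp hnot
  exact lt_of_le_of_ne hled (fun hcon => hdnef (m.toSyn.injective hcon))

/-- Every leading exponent in `J` is divisible by a member of the minimal generating set. -/
lemma exists_minGen (J : Ideal (MvPolynomial (Fin n) K)) (d : Fin n →₀ ℕ)
    (hex : ∃ f ∈ J, f ≠ 0 ∧ lexp m f ≤ d) :
    ∃ d' ∈ minGenSet m J, d' ≤ d := by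
  set S : Set m.syn := {s | ∃ f ∈ J, f ≠ 0 ∧ lexp m f ≤ d ∧ m.toSyn (lexp m f) = s} with hS
  obtain ⟨f₁, hf₁J, hf₁0, hf₁d⟩ := hex
  have hSne : S.Nonempty := ⟨m.toSyn (lexp m f₁), f₁, hf₁J, hf₁0, hf₁d, rfl⟩
  obtain ⟨s₀, hs₀, hmin⟩ := (wellFounded_lt (α := m.syn)).has_min S hSne
  obtain ⟨f₀, hf₀J, hf₀0, hf₀d, rfl⟩ := hs₀
  refine ⟨lexp m f₀, ⟨⟨f₀, hf₀J, hf₀0, rfl⟩, ?_⟩, hf₀d⟩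
  intro g hgJ hg0 hgle
  have h1 : m.toSyn (lexp m g) ≤ m.toSyn (lexp m f₀) := m.toSyn_monotone hgle
  have h2 : m.toSyn (lexp m g) ∈ S := ⟨g, hgJ, hg0, hgle.trans hf₀d, rfl⟩
  have h3 := hmin _ h2
  exact m.toSyn.injective (le_antisymm h1 (not_lt.mp h3))

/-- If `I ⊆ J` and the common σ-ordered minimal generating sets coincide, then `J ⊆ I`. -/
lemma eq_case (I J : Ideal (MvPolynomial (Fin n) K)) (hIJ : I ≤ J)
    (L : List (Fin n →₀ ℕ)) (hLI : IsOsIdeal m I L) (hLJ : IsOsIdeal m J L) :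
    J ≤ I := by
  by_contra hc
  rw [SetLike.not_le_iff_exists] at hc
  obtain ⟨f₁, hf₁J, hf₁I⟩ := hc
  set S : Set m.syn := {s | ∃ f ∈ J, f ∉ I ∧ m.toSyn (lexp m f) = s} with hS
  have hSne : S.Nonempty := ⟨m.toSyn (lexp m f₁), f₁, hf₁J, hf₁I, rfl⟩
  obtain ⟨s₀, hs₀, hmin⟩ := (wellFounded_lt (α := m.syn)).has_min S hSne
  obtain ⟨f, hfJ, hfI, rfl⟩ := hs₀
  have hf0 : f ≠ 0 := fun hcon => hfI (hcon ▸ I.zero_mem)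
  obtain ⟨d', hd'mem, hd'le⟩ := exists_minGen m J (lexp m f) ⟨f, hfJ, hf0, le_rfl⟩
  have hd'L : d' ∈ L := (hLJ.2 d').mpr hd'mem
  have hd'I : d' ∈ minGenSet m I := (hLI.2 d').mp hd'L
  obtain ⟨⟨g, hgI, hg0, hglexp⟩, -⟩ := hd'I
  have hgle : lexp m g ≤ lexp m f := hglexp ▸ hd'le
  set q := f - (MvPolynomial.monomial (lexp m f - lexp m g)
      (lcoeff m f / lcoeff m g)) * g with hq
  have hqJ : q ∈ J := Ideal.sub_mem J hfJ (Ideal.mul_mem_left J _ (hIJ hgI))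
  have hqI : q ∉ I := by
    intro hcon
    apply hfI
    have : f = q + (MvPolynomial.monomial (lexp m f - lexp m g)
        (lcoeff m f / lcoeff m g)) * g := by rw [hq]; ring
    rw [this]
    exact Ideal.add_mem I hcon (Ideal.mul_mem_left I _ hgI)
  have hq0 : q ≠ 0 := fun hcon => hqI (hcon ▸ I.zero_mem)
  have hqlt : m.toSyn (lexp m q) < m.toSyn (lexp m f) :=
    reduce_lt m hf0 hg0 hgle _ (lexp_mem_support m hq0)
  exact hmin _ ⟨q, hqJ, hqI, rfl⟩ hqlt

/-- The key index comparison. -/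
lemma star (I J : Ideal (MvPolynomial (Fin n) K)) (hIJ : I ≤ J)
    (LI LJ : List (Fin n →₀ ℕ)) (hLI : IsOsIdeal m I LI) (hLJ : IsOsIdeal m J LJ)
    {k : ℕ} (hk : k < LI.length) (htake : LI.take k = LJ.take k) :
    ∃ hk' : k < LJ.length, m.toSyn (LJ[k]'hk') ≤ m.toSyn (LI[k]'hk) := by
  set t := LI[k]'hk with ht
  have htL : t ∈ LI := List.getElem_mem hk
  have htmin : t ∈ minGenSet m I := (hLI.2 t).mp htL
  obtain ⟨⟨f, hfI, hf0, hflexp⟩, htmin2⟩ := htmin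
  obtain ⟨d', hd'mem, hd'le⟩ := exists_minGen m J t ⟨f, hIJ hfI, hf0, le_of_eq hflexp⟩
  have hd'LJ : d' ∈ LJ := (hLJ.2 d').mpr hd'mem
  -- d' is not among the first k entries of LJ
  have hd'nt : d' ∉ LJ.take k := by
    intro hcon
    rw [← htake] at hcon
    have hd'LI : d' ∈ LI := List.mem_of_mem_take hcon
    have hd'minI : d' ∈ minGenSet m I := (hLI.2 d').mp hd'LI
    obtain ⟨⟨f', hf'I, hf'0, hf'lexp⟩, -⟩ := hd'minI
    have hd't : d' = t := by
      have := htmin2 f' hf'I hf'0 (hf'lexp ▸ hd'le)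
      rw [← hf'lexp, this]
    rw [hd't] at hcon
    -- then t = LI[k] appears at an index < k, contradicting sortedness
    obtain ⟨i, hi, hieq⟩ := List.mem_iff_getElem.mp hcon
    have hilen : (LI.take k).length = min k LI.length := List.length_take ..
    have hik : i < k := by omega
    have hiL : i < LI.length := by omega
    rw [List.getElem_take] at hieq
    have hpair := (List.pairwise_iff_getElem.mp hLI.1) i k hiL hk hik
    rw [hieq, ← ht] at hpair
    exact lt_irrefl _ hpair
  obtain ⟨i, hi, hieq⟩ := List.mem_iff_getElem.mp hd'LJ
  have hik : ¬ i < k := by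
    intro hcon
    apply hd'nt
    have hlen : i < (LJ.take k).length := by
      rw [List.length_take]
      omega
    exact List.mem_iff_getElem.mpr ⟨i, hlen, by rw [List.getElem_take]; exact hieq⟩
  push_neg at hik
  have hk' : k < LJ.length := lt_of_le_of_lt hik hi
  refine ⟨hk', ?_⟩
  have h1 : m.toSyn d' ≤ m.toSyn t := m.toSyn_monotone hd'le
  rcases lt_or_eq_of_le hik with hlt | heq
  · have hpair := (List.pairwise_iff_getElem.mp hLJ.1) k i hk' hi hlt
    rw [hieq] at hpair
    exact le_of_lt (lt_of_lt_of_le hpair h1)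
  · subst heq
    rw [hieq]
    exact h1

end Aux



/-- if `I ⊊ J` then `O_σ(J) ≺_σ O_σ(I)`. -/
theorem stmt5 {n : ℕ} {K : Type*} [Field K] (m : MonomialOrder (Fin n))
    (I J : Ideal (MvPolynomial (Fin n) K)) (h : I < J)
    (LI LJ : List (Fin n →₀ ℕ))
    (hLI : GB.IsOsIdeal m I LI) (hLJ : GB.IsOsIdeal m J LJ) :
    GB.Prec m LJ LI := by
  have hIJ : I ≤ J := le_of_lt h
  by_cases hpre : LI <+: LJ
  · left
    refine ⟨hpre, ?_⟩
    intro heq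
    subst heq
    exact absurd (eq_case m I J hIJ LI hLI hLJ) h.not_ge
  · right
    have hne : ∃ k, LI.take k ≠ LJ.take k := by
      by_contra hall
      push_neg at hall
      apply hpre
      have h1 := hall (max LI.length LJ.length)
      rw [List.take_of_length_le (le_max_left _ _)] at h1
      rw [h1]
      exact List.take_prefix _ _
    set Kk := Nat.find hne with hKk
    have hKspec : LI.take Kk ≠ LJ.take Kk := Nat.find_spec hne
    have hK0 : Kk ≠ 0 := by
      intro hcon
      rw [hcon] at hKspec
      simp at hKspec
    set k := Kk - 1 with hkdef
    have hkK : k < Kk := by omega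
    have htake : LI.take k = LJ.take k := by
      by_contra hcon
      exact absurd (Nat.find_min hne hkK) (by simp [hcon])
    have hkk1 : k + 1 = Kk := by omega
    have hne1 : LI.take (k + 1) ≠ LJ.take (k + 1) := by rw [hkk1]; exact hKspec
    have hkLI : k < LI.length := by
      by_contra hcon
      push_neg at hcon
      apply hpre
      rw [List.take_of_length_le hcon] at htake
      rw [htake]
      exact List.take_prefix _ _
    obtain ⟨hkLJ, hle⟩ := star m I J hIJ LI LJ hLI hLJ hkLI htake
    have hgne : LI[k]'hkLI ≠ LJ[k]'hkLJ := by
      intro hcon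
      apply hne1
      rw [List.take_succ, List.take_succ, htake]
      congr 1
      rw [List.getElem?_eq_getElem hkLI, List.getElem?_eq_getElem hkLJ, hcon]
    refine ⟨k, hkLI, hkLJ, htake, ?_⟩
    rw [List.getD_eq_getElem _ _ hkLI, List.getD_eq_getElem _ _ hkLJ]
    exact lt_of_le_of_ne hle (fun hcon => hgne (m.toSyn.injective hcon).symm)
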